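/- If a word of length n contains c cubic runs, then it contains fewer than n - c runs in total. -/

import Mathlib

open List

universe u

/-- The factor `w[i..j]` of a word (inclusive positions). -/
def factor {α : Type u} (w : List α) (i j : ℕ) : List α := (w.drop i).take (j - i + 1)

/-- `p` is a period length of the word `u`. -/
def HasPeriodLen {α : Type u} (u : List α) (p : ℕ) : Prop :=
  1 ≤ p ∧ ∀ k, k + p < u.length → u[k]? = u[k + p]?

/-- The smallest period of a word. -/
noncomputable def minPeriod {α : Type u} (u : List α) : ℕ := sInf {p | HasPeriodLen u p}

/-- `[i..j]` is a run in `w`: the factor is periodic with smallest period at most half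
its length, and the periodicity extends neither to the left nor to the right. -/
def IsRun {α : Type u} (w : List α) (i j : ℕ) : Prop :=
  i < j ∧ j < w.length ∧
  2 * minPeriod (factor w i j) ≤ j - i + 1 ∧
  (0 < i → minPeriod (factor w i j) < minPeriod (factor w (i - 1) j)) ∧
  (j + 1 < w.length → minPeriod (factor w i j) < minPeriod (factor w i (j + 1)))

/-- A cubic run: a run whose length is at least three times its smallest period. -/
noncomputable def IsCubicRun {α : Type u} (w : List α) (i j : ℕ) : Prop :=
  IsRun w i j ∧ 3 * minPeriod (factor w i j) ≤ j - i + 1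

section RunsDev
variable {α : Type u}

/-- Strict lexicographic order on lists (proper prefix counts as smaller). -/
def LLt (lt : α → α → Prop) : List α → List α → Prop
  | _, [] => False
  | [], _ :: _ => True
  | a :: s, b :: t => lt a b ∨ (a = b ∧ LLt lt s t)

theorem llt_asymm {lt : α → α → Prop} (hA : ∀ x y, lt x y → ¬ lt y x) :
    ∀ u v : List α, LLt lt u v → ¬ LLt lt v u := by
  intro u
  induction u with
  | nil => intro v h1 h2; cases v <;> simp [LLt] at *
  | cons a s ih =>
    intro v h1 h2
    cases v with
    | nil => simp [LLt] at h1
    | cons b t =>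
      simp only [LLt] at h1 h2
      rcases h1 with h1 | ⟨rfl, h1⟩
      · rcases h2 with h2 | ⟨rfl, h2⟩
        · exact hA _ _ h1 h2
        · exact hA _ _ h1 h1
      · rcases h2 with h2 | ⟨-, h2⟩
        · exact hA _ _ h2 h2
        · exact ih t h1 h2

theorem llt_irrefl {lt : α → α → Prop} (hA : ∀ x y, lt x y → ¬ lt y x) (u : List α) :
    ¬ LLt lt u u := fun h => llt_asymm hA u u h h

theorem llt_trichot {lt : α → α → Prop} (hT : ∀ x y, lt x y ∨ x = y ∨ lt y x) :
    ∀ u v : List α, LLt lt u v ∨ u = v ∨ LLt lt v u := by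
  intro u
  induction u with
  | nil => intro v; cases v <;> simp [LLt]
  | cons a s ih =>
    intro v
    cases v with
    | nil => simp [LLt]
    | cons b t =>
      rcases hT a b with h | rfl | h
      · exact Or.inl (Or.inl h)
      · rcases ih t with h' | rfl | h'
        · exact Or.inl (Or.inr ⟨rfl, h'⟩)
        · exact Or.inr (Or.inl rfl)
        · exact Or.inr (Or.inr (Or.inr ⟨rfl, h'⟩))
      · exact Or.inr (Or.inr (Or.inl h))

theorem llt_trans {lt : α → α → Prop}
    (hTr : ∀ x y z, lt x y → lt y z → lt x z) :
    ∀ u v z : List α, LLt lt u v → LLt lt v z → LLt lt u z := by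
  intro u
  induction u with
  | nil =>
    intro v z h1 h2
    cases v with
    | nil => simp [LLt] at h1
    | cons b t => cases z with
      | nil => simp [LLt] at h2
      | cons c r => simp [LLt]
  | cons a s ih =>
    intro v z h1 h2
    cases v with
    | nil => simp [LLt] at h1
    | cons b t =>
      cases z with
      | nil => simp [LLt] at h2
      | cons c r =>
        simp only [LLt] at *
        rcases h1 with h1 | ⟨rfl, h1⟩
        · rcases h2 with h2 | ⟨rfl, h2⟩
          · exact Or.inl (hTr _ _ _ h1 h2)
          · exact Or.inl h1
        · rcases h2 with h2 | ⟨rfl, h2⟩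
          · exact Or.inl h2
          · exact Or.inr ⟨rfl, ih t r h1 h2⟩

/-- Segment of length `m` starting at `s` of the infinite word `a`. -/
def seg (a : ℕ → α) (s m : ℕ) : List α := (List.range m).map fun k => a (s + k)

theorem seg_length (a : ℕ → α) (s m : ℕ) : (seg a s m).length = m := by
  simp [seg]

theorem seg_succ (a : ℕ → α) (s m : ℕ) : seg a s (m+1) = a s :: seg a (s+1) m := by
  simp only [seg, List.range_succ_eq_map, List.map_cons, List.map_map]
  congr 1
  apply List.map_congr_left
  intro k _
  simp only [Function.comp_apply]
  congr 1
  omega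

theorem seg_drop (a : ℕ → α) (s m d : ℕ) : (seg a s m).drop d = seg a (s+d) (m-d) := by
  induction d generalizing s m with
  | zero => simp
  | succ d ih =>
    cases m with
    | zero => simp [seg]
    | succ m =>
      rw [seg_succ, List.drop_succ_cons, ih]
      congr 1 <;> omega

theorem seg_eq_iff (a : ℕ → α) (s t m : ℕ) :
    seg a s m = seg a t m ↔ ∀ l, l < m → a (s+l) = a (t+l) := by
  induction m generalizing s t with
  | zero => simp [seg]
  | succ m ih =>
    rw [seg_succ, seg_succ, List.cons_eq_cons, ih]
    constructor
    · rintro ⟨h0, h⟩ l hl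
      cases l with
      | zero => simpa using h0
      | succ l => have := h l (by omega); convert this using 2 <;> omega
    · intro h
      refine ⟨by simpa using h 0 (by omega), fun l hl => ?_⟩
      have := h (l+1) (by omega); convert this using 2 <;> omega

theorem llt_seg_iff (lt : α → α → Prop) (a : ℕ → α) (s t m m' : ℕ) :
    LLt lt (seg a s m) (seg a t m') ↔
      (∃ k, k < m ∧ k < m' ∧ (∀ l, l < k → a (s+l) = a (t+l)) ∧ lt (a (s+k)) (a (t+k))) ∨
      (m < m' ∧ ∀ l, l < m → a (s+l) = a (t+l)) := by
  induction m generalizing s t m' with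
  | zero =>
    cases m' with
    | zero => simp [seg, LLt]
    | succ m' => simp [seg, LLt, List.range_succ_eq_map]
  | succ m ih =>
    cases m' with
    | zero =>
      rw [seg_succ]
      show False ↔ _
      constructor
      · intro h; exact h.elim
      · rintro (⟨k, _, hk, _⟩ | ⟨h, _⟩) <;> omega
    | succ m' =>
      rw [seg_succ, seg_succ]
      show lt (a s) (a t) ∨ (a s = a t ∧ LLt lt (seg a (s+1) m) (seg a (t+1) m')) ↔ _
      rw [ih]
      constructor
      · rintro (h | ⟨he, (⟨k, hk1, hk2, hk3, hk4⟩ | ⟨h1, h2⟩)⟩)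
        · exact Or.inl ⟨0, by omega, by omega, fun l hl => by omega, by simpa using h⟩
        · refine Or.inl ⟨k+1, by omega, by omega, fun l hl => ?_, ?_⟩
          · cases l with
            | zero => simpa using he
            | succ l => have := hk3 l (by omega); convert this using 2 <;> omega
          · convert hk4 using 2 <;> omega
        · refine Or.inr ⟨by omega, fun l hl => ?_⟩
          cases l with
          | zero => simpa using he
          | succ l => have := h2 l (by omega); convert this using 2 <;> omega
      · rintro (⟨k, hk1, hk2, hk3, hk4⟩ | ⟨h1, h2⟩)
        · cases k with
          | zero => exact Or.inl (by simpa using hk4)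
          | succ k =>
            refine Or.inr ⟨by simpa using hk3 0 (by omega), Or.inl ⟨k, by omega, by omega, fun l hl => ?_, ?_⟩⟩
            · have := hk3 (l+1) (by omega); convert this using 2 <;> omega
            · convert hk4 using 2 <;> omega
        · refine Or.inr ⟨by simpa using h2 0 (by omega), Or.inr ⟨by omega, fun l hl => ?_⟩⟩
          have := h2 (l+1) (by omega); convert this using 2 <;> omega

/-- Lyndon word w.r.t. `lt`. -/
def Lyn (lt : α → α → Prop) (u : List α) : Prop :=
  u ≠ [] ∧ ∀ d, 0 < d → d < u.length → LLt lt u (u.drop d)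

theorem lyn_ne_nil {lt : α → α → Prop} {u : List α} (h : Lyn lt u) : u ≠ [] := h.1

theorem exists_rel_min {β : Type v} (R : β → β → Prop)
    (hTr : ∀ x y z, R x y → R y z → R x z) (hIrr : ∀ x, ¬ R x x) :
    ∀ s : Finset β, s.Nonempty → ∃ m ∈ s, ∀ x ∈ s, ¬ R x m := by
  classical
  intro s
  induction s using Finset.induction_on with
  | empty => rintro ⟨x, hx⟩; simp at hx
  | @insert b s' hb ih =>
    intro _
    rcases s'.eq_empty_or_nonempty with rfl | hne
    · refine ⟨b, by simp, ?_⟩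
      intro x hx
      have hxb : x = b := by simpa using hx
      subst hxb
      exact hIrr x
    · obtain ⟨m, hm, hmin⟩ := ih hne
      by_cases hR : R b m
      · refine ⟨b, by simp, ?_⟩
        intro x hx
        rcases Finset.mem_insert.mp hx with rfl | hx
        · exact hIrr x
        · intro hxb; exact hmin x hx (hTr _ _ _ hxb hR)
      · refine ⟨m, Finset.mem_insert_of_mem hm, ?_⟩
        intro x hx
        rcases Finset.mem_insert.mp hx with rfl | hx
        · exact hR
        · exact hmin x hx

section OrderLemmas

variable {lt : α → α → Prop} (hA : ∀ x y, lt x y → ¬ lt y x)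
variable {a : ℕ → α}

include hA

theorem lyn_one_long {t q : ℕ} (hq : 2 ≤ q) (h : Lyn lt (seg a t q)) :
    lt (a t) (a (t + (q-1))) := by
  have h2 := h.2 (q-1) (by omega) (by rw [seg_length]; omega)
  rw [seg_drop] at h2
  rcases (llt_seg_iff lt a t (t + (q-1)) q (q - (q-1))).mp h2 with ⟨k, hk1, hk2, _, hk4⟩ | ⟨hc, _⟩
  · have hk0 : k = 0 := by omega
    subst hk0
    simpa using hk4
  · omega

theorem lyn_first_min {t q k : ℕ} (hk : 0 < k) (hkq : k < q) (h : Lyn lt (seg a t q)) :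
    ¬ lt (a (t + k)) (a t) := by
  have h2 := h.2 k hk (by rw [seg_length]; omega)
  rw [seg_drop] at h2
  rcases (llt_seg_iff lt a t (t + k) q (q - k)).mp h2 with ⟨k', hk1, hk2, hk3, hk4⟩ | ⟨hc, _⟩
  · rcases Nat.eq_zero_or_pos k' with rfl | hk'pos
    · simp only [Nat.add_zero] at hk4
      exact hA _ _ hk4
    · have he := hk3 0 hk'pos
      simp only [Nat.add_zero] at he
      rw [← he]
      intro hcon; exact hA _ _ hcon hcon
  · omega

theorem lyn_at_most_one {t q q' : ℕ} (hq : 2 ≤ q) (hq' : 2 ≤ q')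
    (h0 : Lyn lt (seg a t q)) (h1 : Lyn (fun x y => lt y x) (seg a t q')) : False := by
  have hA' : ∀ x y : α, lt y x → ¬ lt x y := fun x y h1 h2 => hA _ _ h2 h1
  rcases le_total q' q with hle | hle
  · have hlong := lyn_one_long hA' hq' h1
    exact lyn_first_min hA (k := q'-1) (by omega) (by omega) h0 hlong
  · have hlong := lyn_one_long hA hq h0
    exact lyn_first_min hA' (k := q-1) (by omega) (by omega) h1 hlong

end OrderLemmas

section RunCore

variable {lt : α → α → Prop} {a : ℕ → α} {i j p : ℕ}
variable (hp1 : 1 ≤ p) (h2p : i + 2*p ≤ j + 1)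
variable (hper : ∀ x, i ≤ x → x + p ≤ j → a x = a (x + p))

include hp1 hper

theorem congAux : ∀ k x, i ≤ x → x + p * k ≤ j → a x = a (x + p * k) := by
  intro k
  induction k with
  | zero => intro x _ _; simp
  | succ k ih =>
    intro x hx hxk
    have hpk : p * (k+1) = p * k + p := by ring
    have h1 : a x = a (x + p * k) := ih x hx (by omega)
    have h2 : a (x + p * k) = a (x + p * k + p) := hper _ (by omega) (by omega)
    rw [h1, h2]; congr 1; ring

theorem cong {x y : ℕ} (hix : i ≤ x) (hxj : x ≤ j) (hiy : i ≤ y) (hyj : y ≤ j)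
    (hmod : x % p = y % p) : a x = a y := by
  have key : ∀ u v : ℕ, u ≤ v → i ≤ u → v ≤ j → u % p = v % p → a u = a v := by
    intro u v huv hiu hvj hm
    have hdvd : p ∣ v - u := (Nat.modEq_iff_dvd' huv).mp hm
    obtain ⟨k, hk⟩ := hdvd
    have hv : v = u + p * k := by omega
    rw [hv]
    exact congAux hp1 hper k u hiu (by omega)
  rcases le_total x y with h | h
  · exact key x y h hix hyj hmod
  · exact (key y x h hiy hxj hmod.symm).symm

omit hper hp1 in
theorem wr_spec (hp1 : 1 ≤ p) {x : ℕ} (hx : i + 1 ≤ x) :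
    i < i + 1 + ((x - (i+1)) % p) ∧ i + 1 + ((x - (i+1)) % p) ≤ i + p ∧
      (i + 1 + ((x - (i+1)) % p)) % p = x % p := by
  have h1 : (x - (i+1)) % p < p := Nat.mod_lt _ (by omega)
  refine ⟨by omega, by omega, ?_⟩
  conv_rhs => rw [show x = (i+1) + (x - (i+1)) by omega]
  exact Nat.ModEq.add_left (i+1) (Nat.mod_modEq _ p)

include h2p

/-- If two in-window rotations of the root coincide, the word has a smaller period. -/
theorem rootDistinct
    (hmin : ∀ q, 1 ≤ q → q < p → ¬ (∀ x, i ≤ x → x + q ≤ j → a x = a (x + q))) :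
    ∀ t t', i < t → t ≤ i + p → i < t' → t' ≤ i + p → seg a t p = seg a t' p → t = t' := by
  have key : ∀ t t', i < t → t ≤ i + p → i < t' → t' ≤ i + p → t < t' →
      seg a t p = seg a t' p → False := by
    intro t t' ht1 ht2 ht1' ht2' htt hseg
    set d := t' - t with hd
    have hd1 : 1 ≤ d := by omega
    have hdp : d < p := by omega
    have heql : ∀ l, l < p → a (t + l) = a (t + d + l) := by
      intro l hl
      have := (seg_eq_iff a t t' p).mp hseg l hl
      rw [this]; congr 1; omega
    -- rotation-invariance of the root
    have hrot : ∀ m, m < p → a (i + m) = a (i + ((m + d) % p)) := by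
      intro m hm
      set l := (i + p + m - t) % p with hldef
      have hlp : l < p := Nat.mod_lt _ (by omega)
      have hmod1 : (t + l) % p = (i + m) % p := by
        have e1 : (t + l) % p = (t + (i + p + m - t)) % p :=
          Nat.ModEq.add_left t (Nat.mod_modEq _ p)
        have e2 : t + (i + p + m - t) = (i + m) + p := by omega
        rw [e1, e2, Nat.add_mod_right]
      have hA1 : a (i + m) = a (t + l) :=
        cong hp1 hper (by omega) (by omega) (by omega) (by omega) hmod1.symm
      have hA2 : a (t + l) = a (t + d + l) := heql l hlp
      have hmod2 : (t + d + l) % p = (i + ((m + d) % p)) % p := by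
        have e1 : (t + d + l) % p = (t + d + (i + p + m - t)) % p :=
          Nat.ModEq.add_left (t + d) (Nat.mod_modEq _ p)
        have e2 : t + d + (i + p + m - t) = (i + (m + d)) + p := by omega
        have e3 : (i + ((m + d) % p)) % p = (i + (m + d)) % p :=
          Nat.ModEq.add_left i (Nat.mod_modEq _ p)
        rw [e1, e2, Nat.add_mod_right, e3]
      have hA3 : a (t + d + l) = a (i + ((m + d) % p)) :=
        cong hp1 hper (by omega) (by omega) (by omega)
          (by have : (m + d) % p < p := Nat.mod_lt _ (by omega); omega) hmod2
      rw [hA1, hA2, hA3]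
    -- derive period d
    apply hmin d hd1 hdp
    intro x hx hxd
    have hxm : (x - i) % p < p := Nat.mod_lt _ (by omega)
    have hb1 : a x = a (i + ((x - i) % p)) := by
      apply cong hp1 hper (by omega) (by omega) (by omega) (by omega)
      conv_lhs => rw [show x = i + (x - i) by omega]
      exact (Nat.ModEq.add_left i (Nat.mod_modEq _ p)).symm
    have hb2 : a (x + d) = a (i + ((((x - i) % p) + d) % p)) := by
      apply cong hp1 hper (by omega) (by omega) (by omega)
        (by have : (((x - i) % p) + d) % p < p := Nat.mod_lt _ (by omega); omega)
      have e1 : (x + d) % p = (i + ((x - i) + d)) % p := by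
        congr 1; omega
      have e2 : (i + ((x - i) + d)) % p = (i + (((x - i) % p) + d)) % p :=
        Nat.ModEq.add_left i (Nat.ModEq.add_right d (Nat.mod_modEq _ p)).symm
      have e3 : (i + (((x - i) % p) + d)) % p = (i + ((((x - i) % p) + d) % p)) % p :=
        (Nat.ModEq.add_left i (Nat.mod_modEq _ p)).symm
      rw [e1, e2, e3]
    rw [hb1, hb2]
    exact hrot _ hxm
  intro t t' ht1 ht2 ht1' ht2' hseg
  rcases lt_trichotomy t t' with h | h | h
  · exact absurd hseg (fun hs => key t t' ht1 ht2 ht1' ht2' h hs)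
  · exact h
  · exact absurd hseg (fun hs => key t' t ht1' ht2' ht1 ht2 h hs.symm)

theorem exists_lyndon_rot
    (hA : ∀ x y : α, lt x y → ¬ lt y x) (hT3 : ∀ x y : α, lt x y ∨ x = y ∨ lt y x)
    (hTr : ∀ x y z : α, lt x y → lt y z → lt x z)
    (hmin : ∀ q, 1 ≤ q → q < p → ¬ (∀ x, i ≤ x → x + q ≤ j → a x = a (x + q))) :
    ∃ t, i < t ∧ t ≤ i + p ∧ Lyn lt (seg a t p) := by
  obtain ⟨t, htW, hminW⟩ :=
    exists_rel_min (fun t t' : ℕ => LLt lt (seg a t p) (seg a t' p))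
      (fun x y z hx hy => llt_trans hTr _ _ _ hx hy)
      (fun x => llt_irrefl hA _)
      (Finset.Ioc i (i+p)) ⟨i+1, Finset.mem_Ioc.mpr ⟨by omega, by omega⟩⟩
  rw [Finset.mem_Ioc] at htW
  obtain ⟨hti, htp⟩ := htW
  have hminW' : ∀ t', i < t' → t' ≤ i + p → ¬ LLt lt (seg a t' p) (seg a t p) :=
    fun t' h1 h2 => hminW t' (Finset.mem_Ioc.mpr ⟨h1, h2⟩)
  refine ⟨t, hti, htp, ?_, ?_⟩
  · intro h
    have := congrArg List.length h
    rw [seg_length] at this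
    simp at this
    omega
  · intro d hd hdlen
    rw [seg_length] at hdlen
    rw [seg_drop]
    by_contra hno
    have hne : seg a t p ≠ seg a (t+d) (p-d) := by
      intro h
      have := congrArg List.length h
      rw [seg_length, seg_length] at this
      omega
    rcases llt_trichot hT3 (seg a t p) (seg a (t+d) (p-d)) with h | h | h
    · exact hno h
    · exact hne h
    rw [llt_seg_iff] at h
    rcases h with ⟨k, hk1, hk2, hk3, hk4⟩ | ⟨_, hpref⟩
    · -- Case A : mismatch inside the suffix
      obtain ⟨hw1, hw2, hw3⟩ := wr_spec (i := i) hp1 (x := t+d) (by omega)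
      set t'' := i + 1 + ((t + d - (i+1)) % p) with ht''def
      have hcong1 : ∀ l, l ≤ k → a (t'' + l) = a (t + d + l) := by
        intro l hl
        exact cong hp1 hper (by omega) (by omega) (by omega) (by omega)
          (Nat.ModEq.add_right l hw3)
      have hR : LLt lt (seg a t'' p) (seg a t p) := by
        rw [llt_seg_iff]
        exact Or.inl ⟨k, by omega, by omega,
          fun l hl => (hcong1 l (by omega)).trans (hk3 l hl),
          by rw [hcong1 k le_rfl]; exact hk4⟩
      exact hminW' t'' (by omega) (by omega) hR
    · -- Case B : the suffix is a prefix (border), rotate by p - d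
      obtain ⟨hw1, hw2, hw3⟩ := wr_spec (i := i) hp1 (x := t+d) (by omega)
      set t' := i + 1 + ((t + d - (i+1)) % p) with ht'def
      have ht'ne : t' ≠ t := by
        intro h
        have hmq : (t+d) % p = t % p := by rw [← hw3, h]
        have hdvd : p ∣ (t + d) - t := (Nat.modEq_iff_dvd' (by omega)).mp hmq.symm
        have : p ∣ d := by
          have e : t + d - t = d := by omega
          rwa [e] at hdvd
        have := Nat.le_of_dvd (by omega) this
        omega
      have hne' : seg a t p ≠ seg a t' p := by
        intro h
        exact ht'ne (rootDistinct hp1 h2p hper hmin t t' hti htp (by omega) (by omega) h).symm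
      rcases llt_trichot hT3 (seg a t p) (seg a t' p) with h2 | h2 | h2
      swap
      · exact hne' h2
      swap
      · exact hminW' t' (by omega) (by omega) h2
      rw [llt_seg_iff] at h2
      rcases h2 with ⟨k, hk1', hk2', heqk, hltk⟩ | ⟨hcc, _⟩
      swap
      · omega
      have regA : ∀ l, l < p - d → a (t' + l) = a (t + d + l) := by
        intro l hl
        exact cong hp1 hper (by omega) (by omega) (by omega) (by omega)
          (Nat.ModEq.add_right l hw3)
      have regB : ∀ l, p - d ≤ l → l < p → a (t' + l) = a (t + l - (p - d)) := by
        intro l hl1 hl2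
        apply cong hp1 hper (by omega) (by omega) (by omega) (by omega)
        have e1 : (t' + l) % p = (t + d + l) % p := Nat.ModEq.add_right l hw3
        have e2 : t + d + l = (t + l - (p - d)) + p := by omega
        rw [e1, e2, Nat.add_mod_right]
      have hkge : p - d ≤ k := by
        by_contra hklt
        push_neg at hklt
        have hee : a (t' + k) = a (t + k) := (regA k hklt).trans (hpref k hklt)
        rw [hee] at hltk
        exact hA _ _ hltk hltk
      have hchain : ∀ l, l < k - (p - d) → a (t + (p - d) + l) = a (t + l) := by
        intro l hl
        have h1 := heqk (p - d + l) (by omega)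
        have h2 := regB (p - d + l) (by omega) (by omega)
        have e1 : t + (p - d) + l = t + (p - d + l) := by omega
        have e2 : t + (p - d + l) - (p - d) = t + l := by omega
        rw [e1, h1, h2, e2]
      obtain ⟨hv1, hv2, hv3⟩ := wr_spec (i := i) hp1 (x := t + (p - d)) (by omega)
      set t₂ := i + 1 + ((t + (p - d) - (i+1)) % p) with ht₂def
      have regC : ∀ l, l < d → a (t₂ + l) = a (t + (p - d) + l) := by
        intro l hl
        exact cong hp1 hper (by omega) (by omega) (by omega) (by omega)
          (Nat.ModEq.add_right l hv3)
      have hfin : LLt lt (seg a t₂ p) (seg a t p) := by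
        rw [llt_seg_iff]
        refine Or.inl ⟨k - (p - d), by omega, by omega, ?_, ?_⟩
        · intro l hl
          exact (regC l (by omega)).trans (hchain l hl)
        · have e1 : a (t₂ + (k - (p - d))) = a (t + (p - d) + (k - (p - d))) :=
            regC _ (by omega)
          have e2 : t + (p - d) + (k - (p - d)) = t + k := by omega
          have e3 : a (t' + k) = a (t + k - (p - d)) := regB k hkge (by omega)
          have e4 : t + k - (p - d) = t + (k - (p - d)) := by omega
          rw [e1, e2]
          rw [e3, e4] at hltk
          exact hltk
      exact hminW' t₂ (by omega) (by omega) hfin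

omit h2p in
/-- Key maximality lemma: inside a run of period `p` whose right extension breaks
lexicographically downwards, no factor starting in the run that is longer than `p`
can be Lyndon. -/
theorem no_longer_lyndon {n : ℕ}
    (hA : ∀ x y : α, lt x y → ¬ lt y x)
    (hT : j + 1 < n → lt (a (j+1)) (a (j+1-p)))
    {t q : ℕ} (hit : i ≤ t) (htp : t + p ≤ j + 1) (hpq : p < q) (hqn : t + q ≤ n) :
    ¬ Lyn lt (seg a t q) := by
  intro hLyn
  have h1 := hLyn.2 p (by omega) (by rw [seg_length]; omega)
  rw [seg_drop] at h1
  have h2 : LLt lt (seg a (t+p) (q-p)) (seg a t q) := by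
    rw [llt_seg_iff]
    by_cases hcase : t + q ≤ j + 1
    · refine Or.inr ⟨by omega, ?_⟩
      intro l hl
      have h := hper (t + l) (by omega) (by omega)
      have e : t + l + p = t + p + l := by omega
      rw [e] at h
      exact h.symm
    · refine Or.inl ⟨j + 1 - p - t, by omega, by omega, ?_, ?_⟩
      · intro l hl
        have h := hper (t + l) (by omega) (by omega)
        have e : t + l + p = t + p + l := by omega
        rw [e] at h
        exact h.symm
      · have e1 : t + p + (j + 1 - p - t) = j + 1 := by omega
        have e2 : t + (j + 1 - p - t) = j + 1 - p := by omega
        rw [e1, e2]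
        exact hT (by omega)
  exact llt_asymm hA _ _ h1 h2

end RunCore

section Abstract

variable {a : ℕ → α} {n : ℕ} {lt : α → α → Prop}

/-- `q` is a period of `a` on `[i..j]`. -/
def PerA (a : ℕ → α) (i j q : ℕ) : Prop :=
  1 ≤ q ∧ ∀ x, i ≤ x → x + q ≤ j → a x = a (x + q)

noncomputable def mpA (a : ℕ → α) (i j : ℕ) : ℕ := sInf {q | PerA a i j q}

theorem perA_top (a : ℕ → α) (i j : ℕ) : PerA a i j (j + 1) :=
  ⟨by omega, fun x hx hxq => by omega⟩

theorem mpA_mem (a : ℕ → α) (i j : ℕ) : PerA a i j (mpA a i j) := by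
  have : mpA a i j ∈ {q | PerA a i j q} :=
    Nat.sInf_mem ⟨j + 1, by exact perA_top a i j⟩
  exact this

theorem mpA_le {i j q : ℕ} (h : PerA a i j q) : mpA a i j ≤ q := Nat.sInf_le h

theorem mpA_not {i j q : ℕ} (h : q < mpA a i j) : ¬ PerA a i j q :=
  fun hq => absurd (mpA_le hq) (by omega)

/-- Abstract form of a run. -/
def RunA (a : ℕ → α) (n i j : ℕ) : Prop :=
  i < j ∧ j < n ∧ 2 * mpA a i j ≤ j - i + 1 ∧
  (0 < i → mpA a i j < mpA a (i-1) j) ∧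
  (j + 1 < n → mpA a i j < mpA a i (j+1))

theorem RunA.p1 {i j : ℕ} (_ : RunA a n i j) : 1 ≤ mpA a i j := (mpA_mem a i j).1

theorem RunA.per {i j : ℕ} (_ : RunA a n i j) :
    ∀ x, i ≤ x → x + mpA a i j ≤ j → a x = a (x + mpA a i j) := (mpA_mem a i j).2

theorem RunA.two {i j : ℕ} (h : RunA a n i j) : i + 2 * mpA a i j ≤ j + 1 := by
  have h1 := h.1
  have h3 := h.2.2.1
  omega

theorem RunA.min {i j : ℕ} (h : RunA a n i j) :
    ∀ q, 1 ≤ q → q < mpA a i j → ¬ (∀ x, i ≤ x → x + q ≤ j → a x = a (x + q)) := by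
  intro q hq1 hq2 hall
  exact mpA_not hq2 ⟨hq1, hall⟩

theorem RunA.maxR {i j : ℕ} (h : RunA a n i j) (hn : j + 1 < n) :
    a (j + 1 - mpA a i j) ≠ a (j + 1) := by
  set p := mpA a i j with hp
  have hlt := h.2.2.2.2 hn
  have hnp : ¬ PerA a i (j+1) p := mpA_not hlt
  have hp1 := h.p1
  rw [PerA, not_and_or] at hnp
  rcases hnp with hc | hc
  · omega
  · push_neg at hc
    obtain ⟨x, hx1, hx2, hx3⟩ := hc
    have hxe : x + p = j + 1 := by
      by_contra hne
      exact hx3 (h.per x hx1 (by omega))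
    have : x = j + 1 - p := by omega
    subst this
    rw [hxe] at hx3
    exact hx3

theorem RunA.maxL {i j : ℕ} (h : RunA a n i j) (hi : 0 < i) :
    a (i - 1) ≠ a (i - 1 + mpA a i j) := by
  set p := mpA a i j with hp
  have hlt := h.2.2.2.1 hi
  have hnp : ¬ PerA a (i-1) j p := mpA_not hlt
  have hp1 := h.p1
  have h2 := h.two
  have h1 := h.1
  rw [PerA, not_and_or] at hnp
  rcases hnp with hc | hc
  · omega
  · push_neg at hc
    obtain ⟨x, hx1, hx2, hx3⟩ := hc
    have hxe : x = i - 1 := by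
      by_contra hne
      exact hx3 (h.per x (by omega) (by omega))
    subst hxe
    exact hx3

/-- The order attached to a run (type selection). -/
noncomputable def ltOf (a : ℕ → α) (n : ℕ) (lt : α → α → Prop) (i j : ℕ) : α → α → Prop :=
  @ite _ (j + 1 < n ∧ lt (a (j + 1 - mpA a i j)) (a (j + 1))) (Classical.propDecidable _)
    (fun x y => lt y x) lt

theorem ltOf_cases (a : ℕ → α) (n : ℕ) (lt : α → α → Prop) (i j : ℕ) :
    ltOf a n lt i j = (fun x y => lt y x) ∨ ltOf a n lt i j = lt := by
  rw [ltOf]; split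
  · exact Or.inl rfl
  · exact Or.inr rfl

theorem ltOf_asymm (hA : ∀ x y : α, lt x y → ¬ lt y x) (i j : ℕ) :
    ∀ x y : α, ltOf a n lt i j x y → ¬ ltOf a n lt i j y x := by
  rcases ltOf_cases a n lt i j with h | h <;> rw [h]
  · intro x y h1 h2
    beta_reduce at h1 h2
    exact hA y x h1 h2
  · exact hA

theorem ltOf_tri (hT3 : ∀ x y : α, lt x y ∨ x = y ∨ lt y x) (i j : ℕ) :
    ∀ x y : α, ltOf a n lt i j x y ∨ x = y ∨ ltOf a n lt i j y x := by
  rcases ltOf_cases a n lt i j with h | h <;> rw [h]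
  · intro x y; rcases hT3 y x with h1 | h1 | h1
    · exact Or.inl h1
    · exact Or.inr (Or.inl h1.symm)
    · exact Or.inr (Or.inr h1)
  · exact hT3

theorem ltOf_trans (hTr : ∀ x y z : α, lt x y → lt y z → lt x z) (i j : ℕ) :
    ∀ x y z : α, ltOf a n lt i j x y → ltOf a n lt i j y z → ltOf a n lt i j x z := by
  rcases ltOf_cases a n lt i j with h | h <;> rw [h]
  · exact fun x y z h1 h2 => hTr z y x h2 h1
  · exact hTr

theorem ltOf_typeOK (hT3 : ∀ x y : α, lt x y ∨ x = y ∨ lt y x)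
    {i j : ℕ} (h : RunA a n i j) (hn : j + 1 < n) :
    ltOf a n lt i j (a (j + 1)) (a (j + 1 - mpA a i j)) := by
  rw [ltOf]
  split
  · next hc => exact hc.2
  · next hc =>
    have hne := h.maxR hn
    rcases hT3 (a (j + 1 - mpA a i j)) (a (j + 1)) with h1 | h1 | h1
    · exact absurd ⟨hn, h1⟩ hc
    · exact absurd h1 hne
    · exact h1

/-- Membership in the position set attached to a run. -/
def InB (a : ℕ → α) (n : ℕ) (lt : α → α → Prop) (i j t : ℕ) : Prop :=
  i < t ∧ t + mpA a i j ≤ j + 1 ∧ Lyn (ltOf a n lt i j) (seg a t (mpA a i j))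

end Abstract

section Abstract2

variable {a : ℕ → α} {n : ℕ} {lt : α → α → Prop}

theorem runA_exB (hA : ∀ x y : α, lt x y → ¬ lt y x)
    (hT3 : ∀ x y : α, lt x y ∨ x = y ∨ lt y x)
    (hTr : ∀ x y z : α, lt x y → lt y z → lt x z)
    {i j : ℕ} (h : RunA a n i j) :
    ∃ t, i < t ∧ t ≤ i + mpA a i j ∧ InB a n lt i j t := by
  obtain ⟨t, ht1, ht2, hLyn⟩ :=
    exists_lyndon_rot (lt := ltOf a n lt i j) (a := a) (i := i) (j := j) h.p1 h.two h.per
      (ltOf_asymm hA i j) (ltOf_tri hT3 i j) (ltOf_trans hTr i j) h.min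
  have h2 := h.two
  exact ⟨t, ht1, ht2, ht1, by omega, hLyn⟩

theorem runA_exB2 (hA : ∀ x y : α, lt x y → ¬ lt y x)
    (hT3 : ∀ x y : α, lt x y ∨ x = y ∨ lt y x)
    (hTr : ∀ x y z : α, lt x y → lt y z → lt x z)
    {i j : ℕ} (h : RunA a n i j) (hcub : 3 * mpA a i j ≤ j - i + 1) :
    ∃ t t', t ≠ t' ∧ InB a n lt i j t ∧ InB a n lt i j t' := by
  obtain ⟨t, ht1, ht2, hB⟩ := runA_exB hA hT3 hTr h
  set p := mpA a i j with hp
  have hp1 := h.p1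
  have h1 := h.1
  have hi3 : i + 3 * p ≤ j + 1 := by omega
  refine ⟨t, t + p, by omega, hB, by omega, by omega, ?_⟩
  have hseg : seg a (t + p) p = seg a t p := by
    rw [seg_eq_iff]
    intro l hl
    have hh := h.per (t + l) (by omega) (by omega)
    rw [← hp] at hh
    have e : t + l + p = t + p + l := by omega
    rw [e] at hh
    exact hh.symm
  rw [hseg]
  exact hB.2.2

theorem mp_lt_false (hA : ∀ x y : α, lt x y → ¬ lt y x)
    (hT3 : ∀ x y : α, lt x y ∨ x = y ∨ lt y x)
    {i j i' j' t : ℕ} (h : RunA a n i j) (h' : RunA a n i' j')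
    (ht : InB a n lt i j t) (ht' : InB a n lt i' j' t)
    (hlt : mpA a i j < mpA a i' j') : False := by
  obtain ⟨hti, htj, htLyn⟩ := ht
  obtain ⟨hti', htj', htLyn'⟩ := ht'
  have hjn := h.2.1
  have hjn' := h'.2.1
  have hpa := h.p1
  have hpa' := h'.p1
  have hnolong : ¬ Lyn (ltOf a n lt i j) (seg a t (mpA a i' j')) := by
    apply no_longer_lyndon (i := i) (j := j) (p := mpA a i j) h.p1 h.per
      (ltOf_asymm hA i j) (fun hn => ltOf_typeOK hT3 h hn) (by omega) htj hlt
    omega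
  have hflipcase : ltOf a n lt i' j' = (fun x y : α => ltOf a n lt i j y x) → False := by
    intro hf
    rw [hf] at htLyn'
    by_cases hp2 : 2 ≤ mpA a i j
    · exact lyn_at_most_one (lt := ltOf a n lt i j) (ltOf_asymm hA i j) hp2 (by omega)
        htLyn htLyn'
    · have hpone : mpA a i j = 1 := by omega
      have h1 : a (t - 1) = a t := by
        have hh := h.per (t - 1) (by omega) (by omega)
        have e : t - 1 + mpA a i j = t := by omega
        rw [e] at hh
        exact hh
      have h2 : a (t - 1) = a (t + (mpA a i' j' - 1)) := by
        have hh := h'.per (t - 1) (by omega) (by omega)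
        have e : t - 1 + mpA a i' j' = t + (mpA a i' j' - 1) := by omega
        rw [e] at hh
        exact hh
      have h3 := lyn_one_long (lt := fun x y : α => ltOf a n lt i j y x)
        (fun x y hx hy => ltOf_asymm hA i j y x hx hy) (by omega : 2 ≤ mpA a i' j') htLyn'
      rw [← h2, ← h1] at h3
      exact ltOf_asymm hA i j _ _ h3 h3
  rcases ltOf_cases a n lt i j with hL | hL <;> rcases ltOf_cases a n lt i' j' with hL' | hL'
  · apply hnolong; rw [hL, ← hL']; exact htLyn'
  · apply hflipcase; rw [hL, hL']
  · apply hflipcase; rw [hL, hL']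
  · apply hnolong; rw [hL, ← hL']; exact htLyn'

theorem eq_of_same_p_right {i j i' j' t : ℕ} (h : RunA a n i j) (h' : RunA a n i' j')
    (hpp : mpA a i j = mpA a i' j')
    (hti : i < t) (htj : t + mpA a i j ≤ j + 1)
    (hti' : i' < t) (htj' : t + mpA a i j ≤ j' + 1)
    (hjj : j < j') : False := by
  have hper' : ∀ x, i' ≤ x → x + mpA a i j ≤ j' → a x = a (x + mpA a i j) := by
    intro x h1 h2
    have hh := h'.per x h1 (by rw [← hpp]; exact h2)
    rw [← hpp] at hh
    exact hh
  have hn : j + 1 < n := by have := h'.2.1; omega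
  have hlt := h.2.2.2.2 hn
  apply mpA_not hlt
  refine ⟨h.p1, ?_⟩
  intro x hx hxq
  by_cases hc : x + mpA a i j ≤ j
  · exact h.per x hx hc
  · have hxe : x + mpA a i j = j + 1 := by omega
    exact hper' x (by omega) (by omega)

theorem eq_of_same_p {i j i' j' t : ℕ} (h : RunA a n i j) (h' : RunA a n i' j')
    (hpp : mpA a i j = mpA a i' j')
    (hti : i < t) (htj : t + mpA a i j ≤ j + 1)
    (hti' : i' < t) (htj' : t + mpA a i j ≤ j' + 1) :
    i = i' ∧ j = j' := by
  have hjj : j = j' := by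
    rcases lt_trichotomy j j' with hc | hc | hc
    · exact absurd (eq_of_same_p_right h h' hpp hti htj hti' htj' hc) not_false
    · exact hc
    · exact absurd (eq_of_same_p_right h' h hpp.symm hti'
        (by rw [← hpp]; exact htj') hti (by rw [← hpp]; exact htj) hc) not_false
  subst hjj
  have hii : i = i' := by
    have key : ∀ i₁ i₂ : ℕ, RunA a n i₁ j → RunA a n i₂ j → mpA a i₁ j = mpA a i j →
        mpA a i₂ j = mpA a i j → i₁ < t → i₂ < t → i₁ < i₂ → False := by
      intro i₁ i₂ h₁ h₂ hp₁ hp₂ hti₁ hti₂ hii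
      have hlt := h₂.2.2.2.1 (by omega)
      rw [hp₂] at hlt
      apply mpA_not hlt
      refine ⟨by have := h.p1; omega, ?_⟩
      intro x hx hxq
      by_cases hc : i₂ ≤ x
      · have hh := h₂.per x hc (by rw [hp₂]; exact hxq)
        rw [hp₂] at hh
        exact hh
      · have hxe : x = i₂ - 1 := by omega
        have hh := h₁.per x (by omega) (by rw [hp₁]; omega)
        rw [hp₁] at hh
        exact hh
    rcases lt_trichotomy i i' with hc | hc | hc
    · exact absurd (key i i' h h' rfl hpp.symm hti hti' hc) not_false
    · exact hc
    · exact absurd (key i' i h' h hpp.symm rfl hti' hti hc) not_false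
  exact ⟨hii, rfl⟩

theorem inB_disjoint (hA : ∀ x y : α, lt x y → ¬ lt y x)
    (hT3 : ∀ x y : α, lt x y ∨ x = y ∨ lt y x)
    {i j i' j' t : ℕ} (h : RunA a n i j) (h' : RunA a n i' j')
    (ht : InB a n lt i j t) (ht' : InB a n lt i' j' t) :
    i = i' ∧ j = j' := by
  have hpp : mpA a i j = mpA a i' j' := by
    rcases lt_trichotomy (mpA a i j) (mpA a i' j') with hc | hc | hc
    · exact absurd (mp_lt_false hA hT3 h h' ht ht' hc) not_false
    · exact hc
    · exact absurd (mp_lt_false hA hT3 h' h ht' ht hc) not_false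
  exact eq_of_same_p h h' hpp ht.1 ht.2.1 ht'.1 (by rw [hpp]; exact ht'.2.1)

end Abstract2

section Bridge

noncomputable section
open Classical

variable (w : List α) (hw : w ≠ [])

theorem getElem?_eq_a {x : ℕ} (hx : x < w.length) :
    w[x]? = some (w.getD x (w.head hw)) := by
  rw [List.getD_eq_getElem?_getD, List.getElem?_eq_getElem hx]
  rfl

theorem factor_getElem? (i j k : ℕ) (hk : k < j - i + 1) :
    (factor w i j)[k]? = w[i+k]? := by
  rw [factor, List.getElem?_take, if_pos hk, List.getElem?_drop]

theorem factor_length (i j : ℕ) (hij : i ≤ j) (hj : j < w.length) :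
    (factor w i j).length = j - i + 1 := by
  rw [factor, List.length_take, List.length_drop]
  omega

theorem hasPeriodLenA_iff (i j q : ℕ) (hij : i ≤ j) (hj : j < w.length) :
    HasPeriodLen (factor w i j) q ↔ PerA (fun x => w.getD x (w.head hw)) i j q := by
  rw [HasPeriodLen, PerA, factor_length w i j hij hj]
  constructor
  · rintro ⟨hq1, hq2⟩
    refine ⟨hq1, ?_⟩
    intro x hx hxq
    have hk := hq2 (x - i) (by omega)
    rw [factor_getElem? w i j _ (by omega), factor_getElem? w i j _ (by omega)] at hk
    rw [getElem?_eq_a w hw (by omega), getElem?_eq_a w hw (by omega)] at hk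
    have e1 : i + (x - i) = x := by omega
    have e2 : i + (x - i + q) = x + q := by omega
    rw [e1, e2] at hk
    exact Option.some.inj hk
  · rintro ⟨hq1, hq2⟩
    refine ⟨hq1, ?_⟩
    intro k hk
    rw [factor_getElem? w i j _ (by omega), factor_getElem? w i j _ (by omega)]
    rw [getElem?_eq_a w hw (by omega), getElem?_eq_a w hw (by omega)]
    have hx := hq2 (i + k) (by omega) (by omega)
    congr 1
    rw [hx]
    congr 1
    omega

theorem minPeriodA_eq (i j : ℕ) (hij : i ≤ j) (hj : j < w.length) :
    minPeriod (factor w i j) = mpA (fun x => w.getD x (w.head hw)) i j := by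
  rw [minPeriod, mpA]
  congr 1
  ext q
  exact hasPeriodLenA_iff w hw i j q hij hj

end

end Bridge

section Assembly

variable (w : List α) (hw : w ≠ [])

theorem isRunA_iff (i j : ℕ) :
    IsRun w i j ↔ RunA (fun x => w.getD x (w.head hw)) w.length i j := by
  constructor
  · rintro ⟨h1, h2, h3, h4, h5⟩
    rw [minPeriodA_eq w hw i j (by omega) h2] at h3 h4 h5
    refine ⟨h1, h2, h3, fun hi => ?_, fun hj => ?_⟩
    · have := h4 hi
      rwa [minPeriodA_eq w hw (i-1) j (by omega) h2] at this
    · have := h5 hj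
      rwa [minPeriodA_eq w hw i (j+1) (by omega) hj] at this
  · rintro ⟨h1, h2, h3, h4, h5⟩
    rw [← minPeriodA_eq w hw i j (by omega) h2] at h3 h4 h5
    refine ⟨h1, h2, h3, fun hi => ?_, fun hj => ?_⟩
    · have := h4 hi
      rwa [← minPeriodA_eq w hw (i-1) j (by omega) h2] at this
    · have := h5 hj
      rwa [← minPeriodA_eq w hw i (j+1) (by omega) hj] at this

include hw in
theorem main_thm (c : ℕ)
    (hc : c = {ij : ℕ × ℕ | IsCubicRun w ij.1 ij.2}.ncard) :
    {ij : ℕ × ℕ | IsRun w ij.1 ij.2}.ncard < w.length - c := by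
  classical
  letI : LinearOrder α := IsWellOrder.linearOrder WellOrderingRel
  set n := w.length with hn
  set a : ℕ → α := fun x => w.getD x (w.head hw) with ha
  have hn1 : 1 ≤ n := by
    rw [hn]
    exact List.length_pos_iff.mpr hw
  set lt : α → α → Prop := fun x y => x < y with hlt
  have hA : ∀ x y : α, lt x y → ¬ lt y x := fun x y h => lt_asymm h
  have hT3 : ∀ x y : α, lt x y ∨ x = y ∨ lt y x := fun x y => lt_trichotomy x y
  have hTr : ∀ x y z : α, lt x y → lt y z → lt x z := fun x y z h1 h2 => lt_trans h1 h2
  set Runs : Finset (ℕ × ℕ) :=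
    (Finset.range n ×ˢ Finset.range n).filter (fun r => IsRun w r.1 r.2) with hRuns
  set Cubs : Finset (ℕ × ℕ) :=
    Runs.filter (fun r => IsCubicRun w r.1 r.2) with hCubs
  have memRuns : ∀ r : ℕ × ℕ, r ∈ Runs ↔ IsRun w r.1 r.2 := by
    intro r
    rw [hRuns, Finset.mem_filter, Finset.mem_product, Finset.mem_range, Finset.mem_range]
    constructor
    · rintro ⟨-, h⟩; exact h
    · intro h
      have h1 := h.1
      have h2 := h.2.1
      exact ⟨⟨by omega, by omega⟩, h⟩
  have memCubs : ∀ r : ℕ × ℕ, r ∈ Cubs ↔ IsCubicRun w r.1 r.2 := by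
    intro r
    rw [hCubs, Finset.mem_filter, memRuns]
    constructor
    · rintro ⟨-, h⟩; exact h
    · intro h; exact ⟨h.1, h⟩
  have hset1 : {ij : ℕ × ℕ | IsRun w ij.1 ij.2} = ↑Runs := by
    ext r; simp [memRuns r, Set.mem_setOf_eq]
  have hset2 : {ij : ℕ × ℕ | IsCubicRun w ij.1 ij.2} = ↑Cubs := by
    ext r; simp [memCubs r, Set.mem_setOf_eq]
  set B : ℕ × ℕ → Finset ℕ :=
    fun r => (Finset.Ioo 0 n).filter (fun t => InB a n lt r.1 r.2 t) with hB
  have memB : ∀ r : ℕ × ℕ, ∀ t, t ∈ B r ↔ (0 < t ∧ t < n ∧ InB a n lt r.1 r.2 t) := by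
    intro r t
    rw [hB]
    simp only [Finset.mem_filter, Finset.mem_Ioo]
    tauto
  -- each run is a RunA
  have hRA : ∀ r : ℕ × ℕ, r ∈ Runs → RunA a n r.1 r.2 := by
    intro r hr
    rw [memRuns] at hr
    exact (isRunA_iff w hw r.1 r.2).mp hr
  -- t-bounds
  have hInBbound : ∀ r : ℕ × ℕ, r ∈ Runs → ∀ t, InB a n lt r.1 r.2 t → 0 < t ∧ t < n := by
    intro r hr t htB
    have hra := hRA r hr
    have hp1 := (mpA_mem a r.1 r.2).1
    have hj := hra.2.1
    have h1 := htB.1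
    have h2 := htB.2.1
    exact ⟨by omega, by omega⟩
  have h1card : ∀ r ∈ Runs, 1 ≤ (B r).card := by
    intro r hr
    obtain ⟨t, -, -, htB⟩ := runA_exB hA hT3 hTr (hRA r hr)
    have hb := hInBbound r hr t htB
    have : t ∈ B r := (memB r t).mpr ⟨hb.1, hb.2, htB⟩
    exact Finset.card_pos.mpr ⟨t, this⟩
  have h2card : ∀ r ∈ Cubs, 2 ≤ (B r).card := by
    intro r hr
    have hrRuns : r ∈ Runs := by
      rw [memCubs] at hr
      rw [memRuns]
      exact hr.1
    have hra := hRA r hrRuns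
    have hcub : 3 * mpA a r.1 r.2 ≤ r.2 - r.1 + 1 := by
      rw [memCubs] at hr
      have h3 := hr.2
      rwa [minPeriodA_eq w hw r.1 r.2 (by have := hra.1; omega) (by exact hra.2.1)] at h3
    obtain ⟨t, t', hne, htB, htB'⟩ := runA_exB2 hA hT3 hTr hra hcub
    have hb := hInBbound r hrRuns t htB
    have hb' := hInBbound r hrRuns t' htB'
    rw [show (2 : ℕ) = 1 + 1 by rfl]
    apply Finset.one_lt_card.mpr
    exact ⟨t, (memB r t).mpr ⟨hb.1, hb.2, htB⟩, t', (memB r t').mpr ⟨hb'.1, hb'.2, htB'⟩, hne⟩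
  have hdisj : ∀ r ∈ Runs, ∀ r' ∈ Runs, r ≠ r' → Disjoint (B r) (B r') := by
    intro r hr r' hr' hne
    rw [Finset.disjoint_left]
    intro t htr htr'
    have h1 := ((memB r t).mp htr).2.2
    have h2 := ((memB r' t).mp htr').2.2
    have := inB_disjoint hA hT3 (hRA r hr) (hRA r' hr') h1 h2
    exact hne (Prod.ext this.1 this.2)
  have hsub : Runs.biUnion B ⊆ Finset.Ioo 0 n := by
    intro t ht
    rw [Finset.mem_biUnion] at ht
    obtain ⟨r, -, htB⟩ := ht
    rw [hB] at htB
    exact Finset.mem_of_mem_filter t htB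
  have hsum : Runs.card + Cubs.card ≤ ∑ r ∈ Runs, (B r).card := by
    have e1 : Cubs.card = ∑ r ∈ Runs, if IsCubicRun w r.1 r.2 then 1 else 0 := by
      rw [hCubs]
      exact Finset.card_filter _ _
    have e2 : Runs.card = ∑ r ∈ Runs, 1 := by simp
    rw [e1, e2, ← Finset.sum_add_distrib]
    apply Finset.sum_le_sum
    intro r hr
    by_cases hc : IsCubicRun w r.1 r.2
    · rw [if_pos hc]
      exact h2card r ((memCubs r).mpr hc)
    · rw [if_neg hc]
      simpa using h1card r hr
  have hbu : ∑ r ∈ Runs, (B r).card = (Runs.biUnion B).card :=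
    (Finset.card_biUnion hdisj).symm
  have hle : (Runs.biUnion B).card ≤ n - 1 := by
    have := Finset.card_le_card hsub
    rwa [Nat.card_Ioo] at this
  have hmain : Runs.card + Cubs.card ≤ n - 1 := by omega
  have hg1 : {ij : ℕ × ℕ | IsRun w ij.1 ij.2}.ncard = Runs.card := by
    rw [hset1, Set.ncard_coe_finset]
  have hg2 : c = Cubs.card := by
    rw [hc, hset2, Set.ncard_coe_finset]
  rw [hg1, hg2]
  omega

end Assembly

end RunsDev

/-- If a word of length `n` contains `c` cubic runs, it contains fewer than `n - c` runs. -/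
theorem runs_lt_length_sub_cubic {α : Type u} (w : List α) (hw : w ≠ []) (c : ℕ)
    (hc : c = {ij : ℕ × ℕ | IsCubicRun w ij.1 ij.2}.ncard) :
    {ij : ℕ × ℕ | IsRun w ij.1 ij.2}.ncard < w.length - c :=
  main_thm w hw c hc
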